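/- Let {(P_U(u), ρ^u)} be a finite ensemble of states on ℂ^{d_A}, and for each u let ρ^u = Σ_x α_{u,x} |ψ_{u,x}⟩⟨ψ_{u,x}| be a decomposition into pure states with α_{u,x} ≥ 0 summing to 1 over x. Consider the refined pure-state ensemble indexed by pairs (u,x) with probabilities P_U(u)·α_{u,x} and states |ψ_{u,x}⟩⟨ψ_{u,x}|, and for each fixed u the conditional pure-state ensemble {(α_{u,x}, |ψ_{u,x}⟩⟨ψ_{u,x}|)}. Then, writing χ_B and χ_E for Holevo quantities with respect to N_B and N_E, one has the chain-rule identity: χ_B({P_U, ρ^u}) − χ_E({P_U, ρ^u}) = [χ_B(refined) − χ_E(refined)] − Σ_u P_U(u) [χ_B(conditional ensemble at u) − χ_E(conditional ensemble at u)]. Moreover χ_B(refined) − χ_E(refined) = I_c(ρ̄) where ρ̄ = Σ_u P_U(u) ρ^u. -/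

import Mathlib

open Matrix BigOperators
open scoped ComplexOrder

noncomputable section

/-- Matrix logarithm via the spectral decomposition (junk value `0` off Hermitian matrices;
eigenvalue `0` contributes `Real.log 0 = 0`). -/
def matLog {n : Type*} [Fintype n] [DecidableEq n] (ρ : Matrix n n ℂ) : Matrix n n ℂ :=
  if h : ρ.IsHermitian then
    (h.eigenvectorUnitary : Matrix n n ℂ) *
      Matrix.diagonal (fun i => (Real.log (h.eigenvalues i) : ℂ)) *
      (h.eigenvectorUnitary : Matrix n n ℂ)ᴴ
  else 0

/-- Von Neumann entropy `H(ρ) = -Tr[ρ log ρ]`. -/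
def vnEntropy {n : Type*} [Fintype n] [DecidableEq n] (ρ : Matrix n n ℂ) : ℝ :=
  - (ρ * matLog ρ).trace.re

/-- Quantum relative entropy `D(ρ‖σ) = Tr[ρ (log ρ - log σ)]`. -/
def relEntropy {n : Type*} [Fintype n] [DecidableEq n] (ρ σ : Matrix n n ℂ) : ℝ :=
  (ρ * (matLog ρ - matLog σ)).trace.re

/-- A state: positive semidefinite with unit trace. -/
def IsState {n : Type*} [Fintype n] (ρ : Matrix n n ℂ) : Prop :=
  ρ.PosSemidef ∧ ρ.trace = 1

/-- A pure (rank-one) state `|ψ⟩⟨ψ|` for a unit vector `ψ`. -/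
def IsPureState {n : Type*} [Fintype n] (ρ : Matrix n n ℂ) : Prop :=
  ∃ ψ : n → ℂ, (∑ i, Complex.normSq (ψ i)) = 1 ∧ ρ = Matrix.vecMulVec ψ (star ψ)

/-- Support (range) inclusion for matrices. -/
def suppLE {n : Type*} [Fintype n] [DecidableEq n] (ρ σ : Matrix n n ℂ) : Prop :=
  LinearMap.range (Matrix.toLin' ρ) ≤ LinearMap.range (Matrix.toLin' σ)

/-- Partial trace over the second tensor factor. -/
def ptraceSnd {α β : Type*} [Fintype β] (M : Matrix (α × β) (α × β) ℂ) : Matrix α α ℂ :=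
  Matrix.of fun i j => ∑ k, M (i, k) (j, k)

/-- Partial trace over the first tensor factor. -/
def ptraceFst {α β : Type*} [Fintype α] (M : Matrix (α × β) (α × β) ℂ) : Matrix β β ℂ :=
  Matrix.of fun i j => ∑ k, M (k, i) (k, j)

variable {dA dB dE : ℕ}

/-- The channel `N_B(ρ) = Tr_E[U ρ U†]`. -/
def chanB (U : Matrix (Fin dB × Fin dE) (Fin dA) ℂ) (ρ : Matrix (Fin dA) (Fin dA) ℂ) :
    Matrix (Fin dB) (Fin dB) ℂ := ptraceSnd (U * ρ * Uᴴ)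

/-- The complementary channel `N_E(ρ) = Tr_B[U ρ U†]`. -/
def chanE (U : Matrix (Fin dB × Fin dE) (Fin dA) ℂ) (ρ : Matrix (Fin dA) (Fin dA) ℂ) :
    Matrix (Fin dE) (Fin dE) ℂ := ptraceFst (U * ρ * Uᴴ)

/-- Coherent information `I_c(ρ) = H(N_B(ρ)) - H(N_E(ρ))`. -/
def cohInfo (U : Matrix (Fin dB × Fin dE) (Fin dA) ℂ) (ρ : Matrix (Fin dA) (Fin dA) ℂ) : ℝ :=
  vnEntropy (chanB U ρ) - vnEntropy (chanE U ρ)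

/-- Holevo quantity of the ensemble `(p, σ)` with respect to the channel `N`. -/
def holevo {ι inn out : Type*} [Fintype ι] [Fintype out] [DecidableEq out]
    [AddCommMonoid (Matrix inn inn ℂ)]
    (N : Matrix inn inn ℂ → Matrix out out ℂ)
    (p : ι → ℝ) (σ : ι → Matrix inn inn ℂ) : ℝ :=
  vnEntropy (N (∑ u, (p u : ℂ) • σ u)) - ∑ u, p u * vnEntropy (N (σ u))

/-- A finite ensemble: a probability distribution together with states. -/
def IsEnsemble {ι inn : Type*} [Fintype ι] [Fintype inn]
    (p : ι → ℝ) (σ : ι → Matrix inn inn ℂ) : Prop :=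
  (∀ u, 0 ≤ p u) ∧ (∑ u, p u = 1) ∧ (∀ u, IsState (σ u))

/-- `Q^{(1)}`: optimized coherent information. -/
def Q1 (U : Matrix (Fin dB × Fin dE) (Fin dA) ℂ) : ℝ :=
  sSup { r | ∃ ρ, IsState ρ ∧ r = cohInfo U ρ }

/-- `C_p^{(1)}`: optimized difference of Holevo quantities. -/
def Cp1 (U : Matrix (Fin dB × Fin dE) (Fin dA) ℂ) : ℝ :=
  sSup { r | ∃ (m : ℕ) (p : Fin m → ℝ) (σ : Fin m → Matrix (Fin dA) (Fin dA) ℂ),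
    IsEnsemble p σ ∧ r = holevo (chanB U) p σ - holevo (chanE U) p σ }


section AuxLemmas

lemma intertwine {m n : Type*} [Fintype m] [Fintype n] [DecidableEq m] [DecidableEq n]
    (V : Matrix m m ℂ) (W : Matrix n n ℂ)
    (hV1 : Vᴴ * V = 1) (hV2 : V * Vᴴ = 1) (hW1 : Wᴴ * W = 1) (hW2 : W * Wᴴ = 1)
    (A : Matrix m n ℂ) (d : m → ℝ) (e : n → ℝ) (f : ℝ → ℝ)
    (h : (V * Matrix.diagonal (fun i => (d i : ℂ)) * Vᴴ) * A
        = A * (W * Matrix.diagonal (fun j => (e j : ℂ)) * Wᴴ)) :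
    (V * Matrix.diagonal (fun i => (f (d i) : ℂ)) * Vᴴ) * A
        = A * (W * Matrix.diagonal (fun j => (f (e j) : ℂ)) * Wᴴ) := by
  set C := Vᴴ * A * W with hC
  set D := Matrix.diagonal (fun i => (d i : ℂ)) with hD
  set E := Matrix.diagonal (fun j => (e j : ℂ)) with hE
  set D' := Matrix.diagonal (fun i => (f (d i) : ℂ)) with hD'
  set E' := Matrix.diagonal (fun j => (f (e j) : ℂ)) with hE'
  have hbase : D * C = C * E := by
    calc D * C = (Vᴴ * V) * D * (Vᴴ * A * W) := by rw [hV1]; simp [Matrix.mul_assoc, hC]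
      _ = Vᴴ * ((V * D * Vᴴ) * A) * W := by simp [Matrix.mul_assoc]
      _ = Vᴴ * (A * (W * E * Wᴴ)) * W := by rw [h]
      _ = (Vᴴ * A * W) * E * (Wᴴ * W) := by simp [Matrix.mul_assoc]
      _ = C * E := by rw [hW1, hC, Matrix.mul_one]
  have hstep : D' * C = C * E' := by
    ext i j
    have hij := congrFun (congrFun hbase i) j
    simp only [hD, hE, hD', hE', Matrix.diagonal_mul, Matrix.mul_diagonal] at hij ⊢
    by_cases hc : C i j = 0
    · simp [hc]
    · have hde : (d i : ℂ) = (e j : ℂ) := by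
        have h2 : (d i : ℂ) * C i j = (e j : ℂ) * C i j := by
          rw [hij, mul_comm]
        exact mul_right_cancel₀ hc h2
      have : d i = e j := by exact_mod_cast hde
      rw [this, mul_comm]
  calc (V * D' * Vᴴ) * A
      = (V * D' * Vᴴ) * A * (W * Wᴴ) := by rw [hW2, Matrix.mul_one]
    _ = V * (D' * C) * Wᴴ := by simp [hC, Matrix.mul_assoc]
    _ = V * (C * E') * Wᴴ := by rw [hstep]
    _ = (V * Vᴴ) * (A * (W * E' * Wᴴ)) := by simp [hC, Matrix.mul_assoc]
    _ = A * (W * E' * Wᴴ) := by rw [hV2, Matrix.one_mul]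

lemma matLog_unitary_diag {n : Type*} [Fintype n] [DecidableEq n] (W : Matrix n n ℂ)
    (hW1 : Wᴴ * W = 1) (hW2 : W * Wᴴ = 1) (g : n → ℝ) :
    matLog (W * Matrix.diagonal (fun i => (g i : ℂ)) * Wᴴ)
      = W * Matrix.diagonal (fun i => (Real.log (g i) : ℂ)) * Wᴴ := by
  have hM : (W * Matrix.diagonal (fun i => (g i : ℂ)) * Wᴴ).IsHermitian := by
    unfold Matrix.IsHermitian
    simp only [Matrix.conjTranspose_mul, Matrix.conjTranspose_conjTranspose,
      Matrix.diagonal_conjTranspose]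
    have : star (fun i => (g i : ℂ)) = fun i => (g i : ℂ) := by
      funext i; simp [Complex.conj_ofReal]
    rw [this, Matrix.mul_assoc]
  rw [matLog, dif_pos hM]
  set V : Matrix n n ℂ := (hM.eigenvectorUnitary : Matrix n n ℂ) with hV
  have hV1 : Vᴴ * V = 1 := by
    rw [← Matrix.star_eq_conjTranspose]
    exact Matrix.mem_unitaryGroup_iff'.mp hM.eigenvectorUnitary.2
  have hV2 : V * Vᴴ = 1 := by
    rw [← Matrix.star_eq_conjTranspose]
    exact Matrix.mem_unitaryGroup_iff.mp hM.eigenvectorUnitary.2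
  have hbase : (V * Matrix.diagonal (fun i => ((hM.eigenvalues i : ℝ) : ℂ)) * Vᴴ) * 1
      = 1 * (W * Matrix.diagonal (fun i => (g i : ℂ)) * Wᴴ) := by
    rw [Matrix.mul_one, Matrix.one_mul]
    have := hM.spectral_theorem
    rw [Unitary.conjStarAlgAut_apply, Matrix.star_eq_conjTranspose] at this
    exact this.symm
  have := intertwine V W hV1 hV2 hW1 hW2 1 hM.eigenvalues g Real.log hbase
  rw [Matrix.mul_one, Matrix.one_mul] at this
  exact this

lemma vnEntropy_unitary_diag {n : Type*} [Fintype n] [DecidableEq n] (W : Matrix n n ℂ)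
    (hW1 : Wᴴ * W = 1) (hW2 : W * Wᴴ = 1) (g : n → ℝ) :
    vnEntropy (W * Matrix.diagonal (fun i => (g i : ℂ)) * Wᴴ)
      = - ∑ i, g i * Real.log (g i) := by
  rw [vnEntropy, matLog_unitary_diag W hW1 hW2 g]
  have hmul : (W * Matrix.diagonal (fun i => (g i : ℂ)) * Wᴴ) *
      (W * Matrix.diagonal (fun i => (Real.log (g i) : ℂ)) * Wᴴ)
      = W * Matrix.diagonal (fun i => ((g i : ℂ) * (Real.log (g i) : ℂ))) * Wᴴ := by
    calc (W * Matrix.diagonal (fun i => (g i : ℂ)) * Wᴴ) *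
        (W * Matrix.diagonal (fun i => (Real.log (g i) : ℂ)) * Wᴴ)
        = W * Matrix.diagonal (fun i => (g i : ℂ)) * (Wᴴ * W) *
            Matrix.diagonal (fun i => (Real.log (g i) : ℂ)) * Wᴴ := by
          simp [Matrix.mul_assoc]
      _ = W * (Matrix.diagonal (fun i => (g i : ℂ)) *
            Matrix.diagonal (fun i => (Real.log (g i) : ℂ))) * Wᴴ := by
          rw [hW1]; simp [Matrix.mul_assoc]
      _ = _ := by rw [Matrix.diagonal_mul_diagonal]
  rw [hmul, Matrix.trace_mul_cycle, hW1, Matrix.one_mul, Matrix.trace_diagonal]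
  simp [Complex.ofReal_mul]

lemma vnEntropy_AAH {m n : Type*} [Fintype m] [Fintype n] [DecidableEq m] [DecidableEq n]
    (A : Matrix m n ℂ) : vnEntropy (A * Aᴴ) = vnEntropy (Aᴴ * A) := by
  have h1 : (A * Aᴴ).IsHermitian := Matrix.isHermitian_mul_conjTranspose_self A
  have h2 : (Aᴴ * A).IsHermitian := Matrix.isHermitian_conjTranspose_mul_self A
  set V : Matrix m m ℂ := (h1.eigenvectorUnitary : Matrix m m ℂ) with hV
  set W : Matrix n n ℂ := (h2.eigenvectorUnitary : Matrix n n ℂ) with hW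
  have hV1 : Vᴴ * V = 1 := by
    rw [← Matrix.star_eq_conjTranspose]; exact Matrix.mem_unitaryGroup_iff'.mp h1.eigenvectorUnitary.2
  have hV2 : V * Vᴴ = 1 := by
    rw [← Matrix.star_eq_conjTranspose]; exact Matrix.mem_unitaryGroup_iff.mp h1.eigenvectorUnitary.2
  have hW1 : Wᴴ * W = 1 := by
    rw [← Matrix.star_eq_conjTranspose]; exact Matrix.mem_unitaryGroup_iff'.mp h2.eigenvectorUnitary.2
  have hW2 : W * Wᴴ = 1 := by
    rw [← Matrix.star_eq_conjTranspose]; exact Matrix.mem_unitaryGroup_iff.mp h2.eigenvectorUnitary.2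
  have hs1 : A * Aᴴ = V * Matrix.diagonal (fun i => ((h1.eigenvalues i : ℝ) : ℂ)) * Vᴴ := by
    have := h1.spectral_theorem; rw [Unitary.conjStarAlgAut_apply, Matrix.star_eq_conjTranspose] at this; exact this
  have hs2 : Aᴴ * A = W * Matrix.diagonal (fun i => ((h2.eigenvalues i : ℝ) : ℂ)) * Wᴴ := by
    have := h2.spectral_theorem; rw [Unitary.conjStarAlgAut_apply, Matrix.star_eq_conjTranspose] at this; exact this
  have hbase : (V * Matrix.diagonal (fun i => ((h1.eigenvalues i : ℝ) : ℂ)) * Vᴴ) * A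
      = A * (W * Matrix.diagonal (fun i => ((h2.eigenvalues i : ℝ) : ℂ)) * Wᴴ) := by
    rw [← hs1, ← hs2, Matrix.mul_assoc]
  have hint := intertwine V W hV1 hV2 hW1 hW2 A h1.eigenvalues h2.eigenvalues Real.log hbase
  have hlog1 : matLog (A * Aᴴ)
      = V * Matrix.diagonal (fun i => (Real.log (h1.eigenvalues i) : ℂ)) * Vᴴ := by
    rw [matLog, dif_pos h1]
  have hlog2 : matLog (Aᴴ * A)
      = W * Matrix.diagonal (fun i => (Real.log (h2.eigenvalues i) : ℂ)) * Wᴴ := by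
    rw [matLog, dif_pos h2]
  have hLA : matLog (A * Aᴴ) * A = A * matLog (Aᴴ * A) := by rw [hlog1, hlog2]; exact hint
  have htr : ((A * Aᴴ) * matLog (A * Aᴴ)).trace = ((Aᴴ * A) * matLog (Aᴴ * A)).trace := by
    calc ((A * Aᴴ) * matLog (A * Aᴴ)).trace
        = (A * (Aᴴ * matLog (A * Aᴴ))).trace := by rw [Matrix.mul_assoc]
      _ = ((Aᴴ * matLog (A * Aᴴ)) * A).trace := Matrix.trace_mul_comm _ _
      _ = (Aᴴ * (matLog (A * Aᴴ) * A)).trace := by rw [Matrix.mul_assoc]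
      _ = (Aᴴ * (A * matLog (Aᴴ * A))).trace := by rw [hLA]
      _ = ((Aᴴ * A) * matLog (Aᴴ * A)).trace := by rw [Matrix.mul_assoc]
  rw [vnEntropy, vnEntropy, htr]

lemma vnEntropy_transpose {n : Type*} [Fintype n] [DecidableEq n] (M : Matrix n n ℂ)
    (hM : M.IsHermitian) : vnEntropy Mᵀ = vnEntropy M := by
  set V : Matrix n n ℂ := (hM.eigenvectorUnitary : Matrix n n ℂ) with hV
  have hV1 : Vᴴ * V = 1 := by
    rw [← Matrix.star_eq_conjTranspose]; exact Matrix.mem_unitaryGroup_iff'.mp hM.eigenvectorUnitary.2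
  have hV2 : V * Vᴴ = 1 := by
    rw [← Matrix.star_eq_conjTranspose]; exact Matrix.mem_unitaryGroup_iff.mp hM.eigenvectorUnitary.2
  have hs : M = V * Matrix.diagonal (fun i => ((hM.eigenvalues i : ℝ) : ℂ)) * Vᴴ := by
    have := hM.spectral_theorem; rw [Unitary.conjStarAlgAut_apply, Matrix.star_eq_conjTranspose] at this; exact this
  set V' : Matrix n n ℂ := Vᴴᵀ with hV'
  have hV'H : V'ᴴ = Vᵀ := by
    rw [hV']; ext i j; simp [Matrix.conjTranspose_apply, Matrix.transpose_apply]
  have hV'1 : V'ᴴ * V' = 1 := by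
    rw [hV'H, hV', ← Matrix.transpose_mul, hV1, Matrix.transpose_one]
  have hV'2 : V' * V'ᴴ = 1 := by
    rw [hV'H, hV', ← Matrix.transpose_mul, hV2, Matrix.transpose_one]
  have hsT : Mᵀ = V' * Matrix.diagonal (fun i => ((hM.eigenvalues i : ℝ) : ℂ)) * V'ᴴ := by
    conv_lhs => rw [hs]
    rw [Matrix.transpose_mul, Matrix.transpose_mul, Matrix.diagonal_transpose, hV'H, hV']
    simp [Matrix.mul_assoc]
  rw [hsT]
  conv_rhs => rw [hs]
  rw [vnEntropy_unitary_diag V' hV'1 hV'2, vnEntropy_unitary_diag V hV1 hV2]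

lemma ptraceSnd_vecMulVec {β γ : Type*} [Fintype β] [Fintype γ] [DecidableEq β] [DecidableEq γ]
    (w : β × γ → ℂ) :
    ptraceSnd (Matrix.vecMulVec w (star w))
      = (Matrix.of fun b e => w (b, e)) * (Matrix.of fun b e => w (b, e))ᴴ := by
  ext i j
  simp [ptraceSnd, Matrix.vecMulVec_apply, Matrix.mul_apply, Matrix.conjTranspose_apply]

lemma ptraceFst_vecMulVec {β γ : Type*} [Fintype β] [Fintype γ] [DecidableEq β] [DecidableEq γ]
    (w : β × γ → ℂ) :
    ptraceFst (Matrix.vecMulVec w (star w))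
      = ((Matrix.of fun b e => w (b, e))ᴴ * (Matrix.of fun b e => w (b, e)))ᵀ := by
  ext i j
  simp [ptraceFst, Matrix.vecMulVec_apply, Matrix.mul_apply, Matrix.conjTranspose_apply,
    Matrix.transpose_apply, mul_comm]

lemma conj_vecMulVec {p q : Type*} [Fintype p] [Fintype q] [DecidableEq p] [DecidableEq q]
    (U : Matrix p q ℂ) (φ : q → ℂ) :
    U * Matrix.vecMulVec φ (star φ) * Uᴴ
      = Matrix.vecMulVec (U.mulVec φ) (star (U.mulVec φ)) := by
  ext i j
  simp only [Matrix.mul_apply, Matrix.vecMulVec_apply, Matrix.conjTranspose_apply,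
    Matrix.mulVec, dotProduct, Pi.star_apply, star_sum, star_mul',
    Finset.sum_mul, Finset.mul_sum]
  refine Finset.sum_congr rfl fun l _ => Finset.sum_congr rfl fun k _ => ?_
  ring

lemma vnEntropy_pure_eq {dA dB dE : ℕ} (U : Matrix (Fin dB × Fin dE) (Fin dA) ℂ)
    (φ : Fin dA → ℂ) :
    vnEntropy (chanB U (Matrix.vecMulVec φ (star φ)))
      = vnEntropy (chanE U (Matrix.vecMulVec φ (star φ))) := by
  rw [chanB, chanE, conj_vecMulVec U φ, ptraceSnd_vecMulVec, ptraceFst_vecMulVec,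
    vnEntropy_transpose _ (Matrix.isHermitian_conjTranspose_mul_self _)]
  exact vnEntropy_AAH _

end AuxLemmas

/-- Chain rule for differences of Holevo quantities: refining an ensemble
`{(P_U(u), ρ^u)}` by pure-state decompositions `ρ^u = Σ_x α_{u,x} |ψ_{u,x}⟩⟨ψ_{u,x}|` gives
`χ_B − χ_E = [χ_B(refined) − χ_E(refined)] − Σ_u P_U(u)[χ_B(cond. at u) − χ_E(cond. at u)]`,
and the refined difference equals the coherent information of the average state. -/
theorem holevo_difference_chain_rule
    {dA dB dE : ℕ} (hdA : 1 ≤ dA) (hdB : 1 ≤ dB) (hdE : 1 ≤ dE)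
    (U : Matrix (Fin dB × Fin dE) (Fin dA) ℂ) (hU : Uᴴ * U = 1)
    (m r : ℕ) (P : Fin m → ℝ) (ρ : Fin m → Matrix (Fin dA) (Fin dA) ℂ)
    (hens : IsEnsemble P ρ)
    (α : Fin m → Fin r → ℝ) (ψ : Fin m → Fin r → Fin dA → ℂ)
    (hα : ∀ u x, 0 ≤ α u x) (hαsum : ∀ u, ∑ x, α u x = 1)
    (hψ : ∀ u x, (∑ i, Complex.normSq (ψ u x i)) = 1)
    (hdecomp : ∀ u, ρ u =
      ∑ x, (α u x : ℂ) • Matrix.vecMulVec (ψ u x) (star (ψ u x))) :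
    (holevo (chanB U) P ρ - holevo (chanE U) P ρ
      = (holevo (chanB U) (fun ux : Fin m × Fin r => P ux.1 * α ux.1 ux.2)
            (fun ux => Matrix.vecMulVec (ψ ux.1 ux.2) (star (ψ ux.1 ux.2)))
          - holevo (chanE U) (fun ux : Fin m × Fin r => P ux.1 * α ux.1 ux.2)
            (fun ux => Matrix.vecMulVec (ψ ux.1 ux.2) (star (ψ ux.1 ux.2))))
        - ∑ u, P u *
          (holevo (chanB U) (α u)
              (fun x => Matrix.vecMulVec (ψ u x) (star (ψ u x)))
            - holevo (chanE U) (α u)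
              (fun x => Matrix.vecMulVec (ψ u x) (star (ψ u x)))))
    ∧ holevo (chanB U) (fun ux : Fin m × Fin r => P ux.1 * α ux.1 ux.2)
          (fun ux => Matrix.vecMulVec (ψ ux.1 ux.2) (star (ψ ux.1 ux.2)))
        - holevo (chanE U) (fun ux : Fin m × Fin r => P ux.1 * α ux.1 ux.2)
          (fun ux => Matrix.vecMulVec (ψ ux.1 ux.2) (star (ψ ux.1 ux.2)))
      = cohInfo U (∑ u, (P u : ℂ) • ρ u) := by
  classical
  have key := vnEntropy_pure_eq U
  have havg : (∑ ux : Fin m × Fin r, ((P ux.1 * α ux.1 ux.2 : ℝ) : ℂ) •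
        Matrix.vecMulVec (ψ ux.1 ux.2) (star (ψ ux.1 ux.2)))
      = ∑ u, ((P u : ℝ) : ℂ) • ρ u := by
    rw [Fintype.sum_prod_type]
    refine Finset.sum_congr rfl fun u _ => ?_
    rw [hdecomp u, Finset.smul_sum]
    refine Finset.sum_congr rfl fun x _ => ?_
    rw [smul_smul, Complex.ofReal_mul]
  have hrefined : holevo (chanB U) (fun ux : Fin m × Fin r => P ux.1 * α ux.1 ux.2)
        (fun ux => Matrix.vecMulVec (ψ ux.1 ux.2) (star (ψ ux.1 ux.2)))
      - holevo (chanE U) (fun ux : Fin m × Fin r => P ux.1 * α ux.1 ux.2)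
        (fun ux => Matrix.vecMulVec (ψ ux.1 ux.2) (star (ψ ux.1 ux.2)))
      = cohInfo U (∑ u, (P u : ℂ) • ρ u) := by
    simp only [holevo, cohInfo]
    rw [havg]
    have hsum : ∑ ux : Fin m × Fin r, (P ux.1 * α ux.1 ux.2) *
          vnEntropy (chanB U (Matrix.vecMulVec (ψ ux.1 ux.2) (star (ψ ux.1 ux.2))))
        = ∑ ux : Fin m × Fin r, (P ux.1 * α ux.1 ux.2) *
          vnEntropy (chanE U (Matrix.vecMulVec (ψ ux.1 ux.2) (star (ψ ux.1 ux.2)))) :=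
      Finset.sum_congr rfl fun ux _ => by rw [key]
    rw [hsum]; ring
  have hcond : ∀ u, holevo (chanB U) (α u)
        (fun x => Matrix.vecMulVec (ψ u x) (star (ψ u x)))
      - holevo (chanE U) (α u)
        (fun x => Matrix.vecMulVec (ψ u x) (star (ψ u x)))
      = cohInfo U (ρ u) := by
    intro u
    simp only [holevo, cohInfo]
    rw [← hdecomp u]
    have hsum : ∑ x, (α u x) *
          vnEntropy (chanB U (Matrix.vecMulVec (ψ u x) (star (ψ u x))))
        = ∑ x, (α u x) *
          vnEntropy (chanE U (Matrix.vecMulVec (ψ u x) (star (ψ u x)))) :=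
      Finset.sum_congr rfl fun x _ => by rw [key]
    rw [hsum]; ring
  constructor
  · rw [hrefined]
    have hc : (∑ u, P u * (holevo (chanB U) (α u)
          (fun x => Matrix.vecMulVec (ψ u x) (star (ψ u x)))
        - holevo (chanE U) (α u)
          (fun x => Matrix.vecMulVec (ψ u x) (star (ψ u x)))))
        = ∑ u, P u * cohInfo U (ρ u) :=
      Finset.sum_congr rfl fun u _ => by rw [hcond u]
    rw [hc]
    simp only [holevo, cohInfo, mul_sub]
    rw [Finset.sum_sub_distrib]
    ring
  · exact hrefined

end
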